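/- arXiv:1910.11955 — 2 statements merged into one kernel-verified Lean document; each statement's English description precedes it below -/
import Mathlib

section
/- The formal power series G(q) = sum over n >= 0 of ((5n)!/(n!)^5) q^n in Q[[q]] satisfies theta^4 G = 5 q (5 theta + 1)(5 theta + 2)(5 theta + 3)(5 theta + 4) G, where theta = q * d/dq. -/
open PowerSeries

/-- The logarithmic derivation `θ = q d/dq` on `ℚ[[q]]`, acting by `θ(q^n) = n q^n`. -/
noncomputable def theta (f : PowerSeries ℚ) : PowerSeries ℚ :=
  PowerSeries.mk fun n => (n : ℚ) * PowerSeries.coeff n f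

/-- The operator `5θ + k` on `ℚ[[q]]`. -/
noncomputable def op5 (k : ℕ) (f : PowerSeries ℚ) : PowerSeries ℚ :=
  5 • theta f + (k : ℚ) • f

lemma coeff_theta (n : ℕ) (f : PowerSeries ℚ) :
    PowerSeries.coeff n (theta f) = (n : ℚ) * PowerSeries.coeff n f := by
  simp [theta]

lemma coeff_op5 (k n : ℕ) (f : PowerSeries ℚ) :
    PowerSeries.coeff n (op5 k f) = (5 * n + k : ℚ) * PowerSeries.coeff n f := by
  simp only [op5, map_add, map_nsmul, map_smul, coeff_theta, smul_eq_mul]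
  ring

/-- `G(q) = ∑ ((5n)!/(n!)^5) q^n` satisfies
`θ^4 G = 5 q (5θ+1)(5θ+2)(5θ+3)(5θ+4) G`. -/
theorem quintic_picard_fuchs :
    theta (theta (theta (theta (PowerSeries.mk fun n : ℕ =>
        (Nat.factorial (5 * n) : ℚ) / (Nat.factorial n : ℚ) ^ 5)))) =
      5 • (PowerSeries.X *
        op5 1 (op5 2 (op5 3 (op5 4 (PowerSeries.mk fun n : ℕ =>
          (Nat.factorial (5 * n) : ℚ) / (Nat.factorial n : ℚ) ^ 5))))) := by
  ext n
  cases n with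
  | zero =>
      simp [coeff_theta]
  | succ m =>
      rw [map_nsmul, PowerSeries.coeff_succ_X_mul]
      simp only [coeff_theta, coeff_op5, coeff_mk, smul_eq_mul]
      have h1 : ((5 * (m + 1)).factorial : ℚ) =
          (5*(m:ℚ)+5) * ((5*m+4)) * ((5*m+3)) * ((5*m+2)) * ((5*m+1)) * (5*m).factorial := by
        have e : 5*(m+1) = ((((5*m+1)+1)+1)+1)+1 := by ring
        rw [e, Nat.factorial_succ, Nat.factorial_succ, Nat.factorial_succ,
          Nat.factorial_succ, Nat.factorial_succ]
        push_cast
        ring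
      have h2 : ((m + 1).factorial : ℚ) = (m+1) * m.factorial := by
        push_cast [Nat.factorial_succ]; ring
      have hm : ((m : ℚ) + 1) ≠ 0 := by positivity
      have hf : ((m.factorial : ℚ)) ≠ 0 := by
        exact_mod_cast Nat.factorial_ne_zero m
      push_cast [h1, h2]
      field_simp
      have hx : (m.factorial : ℚ) ^ 5 * (m.factorial : ℚ)⁻¹ ^ 5 = 1 := by
        rw [← mul_pow, mul_inv_cancel₀ hf, one_pow]
      linear_combination (-((m:ℚ)*1250 + (m:ℚ)^2*4375 + (m:ℚ)^3*6250 + (m:ℚ)^4*3125 + 120)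
        * ((5*m).factorial : ℚ)) * hx
end

section
/- Let R = Q[[q]][L] with the derivation theta extending theta = q d/dq on Q[[q]] and satisfying theta(L) = 1 (L is a formal logarithm of q). Let f0 = sum over n >= 0 of ((4n)!/(n!)^4) q^n, and let f1 = f0 * L + 4 * sum over n >= 1 of ((4n)!/(n!)^4) * (H_{4n} - H_n) * q^n, where H_m = sum over j from 1 to m of 1/j. Then theta^3 f1 = 4 q (4 theta + 1)(4 theta + 2)(4 theta + 3) f1. -/
open PowerSeries Polynomial

/-- The logarithmic derivation `θ = q d/dq` on `ℚ[[q]]`. -/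
noncomputable def thetaQ (f : PowerSeries ℚ) : PowerSeries ℚ :=
  PowerSeries.mk fun n => (n : ℚ) * PowerSeries.coeff n f

/-- The derivation `θ` on `R = ℚ[[q]][L]` extending `q d/dq` with `θ(L) = 1`. -/
noncomputable def thetaR (p : Polynomial (PowerSeries ℚ)) : Polynomial (PowerSeries ℚ) :=
  p.sum (fun i a => Polynomial.C (thetaQ a) * Polynomial.X ^ i) + Polynomial.derivative p

/-- The operator `4θ + k` on `R`. -/
noncomputable def op4R (k : ℕ) (p : Polynomial (PowerSeries ℚ)) : Polynomial (PowerSeries ℚ) :=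
  4 • thetaR p + Polynomial.C (PowerSeries.C (k : ℚ)) * p

/-- Harmonic number `H_m = ∑_{j=1}^m 1/j`. -/
def harmonic' (m : ℕ) : ℚ := ∑ j ∈ Finset.range m, 1 / ((j : ℚ) + 1)

/-- The holomorphic solution `f0 = ∑ ((4n)!/(n!)^4) q^n`, regarded in `R`. -/
noncomputable def f0R : Polynomial (PowerSeries ℚ) :=
  Polynomial.C (PowerSeries.mk fun n : ℕ =>
    (Nat.factorial (4 * n) : ℚ) / (Nat.factorial n : ℚ) ^ 4)

/-- The logarithmic solution
`f1 = f0 · L + 4 ∑_{n ≥ 1} ((4n)!/(n!)^4) (H_{4n} - H_n) q^n`. -/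
noncomputable def f1R : Polynomial (PowerSeries ℚ) :=
  f0R * Polynomial.X +
    Polynomial.C (4 * PowerSeries.mk fun n : ℕ =>
      if n = 0 then 0 else
        ((Nat.factorial (4 * n) : ℚ) / (Nat.factorial n : ℚ) ^ 4) *
          (harmonic' (4 * n) - harmonic' n))

/-! ### Auxiliary lemmas -/

lemma thetaQ_zero : thetaQ 0 = 0 := by
  ext n; simp [thetaQ]

lemma thetaQ_add (f g : PowerSeries ℚ) : thetaQ (f + g) = thetaQ f + thetaQ g := by
  ext n; simp [thetaQ]; ring

lemma thetaR_C (a : PowerSeries ℚ) : thetaR (Polynomial.C a) = Polynomial.C (thetaQ a) := by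
  unfold thetaR
  rw [Polynomial.sum_C_index (by simp [thetaQ_zero])]
  simp

lemma thetaR_CX (b : PowerSeries ℚ) :
    thetaR (Polynomial.C b * Polynomial.X) =
      Polynomial.C (thetaQ b) * Polynomial.X + Polynomial.C b := by
  unfold thetaR
  rw [Polynomial.C_mul_X_eq_monomial, Polynomial.sum_monomial_index _ _ (by simp [thetaQ_zero])]
  simp [Polynomial.C_mul_X_eq_monomial]

lemma thetaR_add (p q : Polynomial (PowerSeries ℚ)) :
    thetaR (p + q) = thetaR p + thetaR q := by
  unfold thetaR
  rw [Polynomial.sum_add_index _ _ _ (by simp [thetaQ_zero]) (by simp [thetaQ_add, add_mul]),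
    Polynomial.derivative_add]
  ring

lemma thetaR_pair (a b : PowerSeries ℚ) :
    thetaR (Polynomial.C a + Polynomial.C b * Polynomial.X) =
      Polynomial.C (thetaQ a + b) + Polynomial.C (thetaQ b) * Polynomial.X := by
  rw [thetaR_add, thetaR_C, thetaR_CX, map_add]
  ring

lemma op4R_pair (k : ℕ) (a b : PowerSeries ℚ) :
    op4R k (Polynomial.C a + Polynomial.C b * Polynomial.X) =
      Polynomial.C (4 * thetaQ a + 4 * b + PowerSeries.C (k : ℚ) * a) +
      Polynomial.C (4 * thetaQ b + PowerSeries.C (k : ℚ) * b) * Polynomial.X := by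
  unfold op4R
  rw [thetaR_pair]
  simp only [map_add, map_mul, map_ofNat, smul_add]
  ring

lemma four_smul_pair (A B : PowerSeries ℚ) :
    4 • (Polynomial.C (PowerSeries.X : PowerSeries ℚ) *
        (Polynomial.C A + Polynomial.C B * Polynomial.X)) =
      Polynomial.C (4 * (PowerSeries.X * A)) +
        Polynomial.C (4 * (PowerSeries.X * B)) * Polynomial.X := by
  simp only [map_mul, map_ofNat]
  ring

lemma pair_congr {a b c d : PowerSeries ℚ} (h0 : a = c) (h1 : b = d) :
    Polynomial.C a + Polynomial.C b * Polynomial.X =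
      Polynomial.C c + Polynomial.C d * Polynomial.X := by rw [h0, h1]

lemma constantCoeff_thetaQ (f : PowerSeries ℚ) :
    PowerSeries.constantCoeff (thetaQ f) = 0 := by
  rw [← PowerSeries.coeff_zero_eq_constantCoeff]
  simp [thetaQ]

lemma coeff_thetaQ (n : ℕ) (f : PowerSeries ℚ) :
    PowerSeries.coeff n (thetaQ f) = (n : ℚ) * PowerSeries.coeff n f := by
  simp [thetaQ]

lemma coeff_four_mul (n : ℕ) (f : PowerSeries ℚ) :
    PowerSeries.coeff n (4 * f) = 4 * PowerSeries.coeff n f := by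
  rw [show (4 : PowerSeries ℚ) = PowerSeries.C 4 from (map_ofNat (PowerSeries.C (R := ℚ)) 4).symm,
    PowerSeries.coeff_C_mul]

/-- The holomorphic solution, as a power series. -/
noncomputable def f0S : PowerSeries ℚ :=
  PowerSeries.mk fun n : ℕ => (Nat.factorial (4 * n) : ℚ) / (Nat.factorial n : ℚ) ^ 4

/-- The logarithmic correction term, as a power series (without the `if`). -/
noncomputable def gS : PowerSeries ℚ :=
  4 * PowerSeries.mk fun n : ℕ =>
    ((Nat.factorial (4 * n) : ℚ) / (Nat.factorial n : ℚ) ^ 4) *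
      (harmonic' (4 * n) - harmonic' n)

lemma f1R_eq : f1R = Polynomial.C gS + Polynomial.C f0S * Polynomial.X := by
  have hif : (PowerSeries.mk fun n : ℕ =>
      if n = 0 then 0 else
        ((Nat.factorial (4 * n) : ℚ) / (Nat.factorial n : ℚ) ^ 4) *
          (harmonic' (4 * n) - harmonic' n)) =
      PowerSeries.mk fun n : ℕ =>
        ((Nat.factorial (4 * n) : ℚ) / (Nat.factorial n : ℚ) ^ 4) *
          (harmonic' (4 * n) - harmonic' n) := by
    ext n
    rcases n with _ | n
    · simp [harmonic']
    · simp
  rw [f1R, f0R, hif, gS, f0S]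
  ring

lemma fact4_succ (n : ℕ) : Nat.factorial (4 * (n+1)) =
    (4*n+4) * ((4*n+3) * ((4*n+2) * ((4*n+1) * Nat.factorial (4*n)))) := by
  rw [show 4*(n+1) = (4*n+3)+1 by ring]
  simp [Nat.factorial_succ]

lemma harmonic'_succ (m : ℕ) : harmonic' (m+1) = harmonic' m + 1 / ((m:ℚ)+1) := by
  simp [harmonic', Finset.sum_range_succ]

lemma harmonic'_4succ (n : ℕ) : harmonic' (4*(n+1)) = harmonic' (4*n)
    + 1/((4*n+1 : ℕ):ℚ) + 1/((4*n+2 : ℕ):ℚ) + 1/((4*n+3 : ℕ):ℚ) + 1/((4*n+4 : ℕ):ℚ) := by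
  rw [show 4*(n+1) = (4*n+3)+1 by ring, harmonic'_succ, harmonic'_succ, harmonic'_succ,
    harmonic'_succ]
  push_cast
  ring

/-- `f1` satisfies the Picard-Fuchs equation
`θ^3 f1 = 4 q (4θ+1)(4θ+2)(4θ+3) f1` in `R = ℚ[[q]][L]`. -/
theorem quartic_K3_log_solution :
    thetaR (thetaR (thetaR f1R)) =
      4 • (Polynomial.C (PowerSeries.X : PowerSeries ℚ) *
        op4R 1 (op4R 2 (op4R 3 f1R))) := by
  rw [f1R_eq]
  simp only [thetaR_pair, op4R_pair, four_smul_pair]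
  have h1 : ∀ n : ℕ, ((n:ℚ)+1) ≠ 0 := fun n => by positivity
  have h2 : ∀ m : ℕ, ((Nat.factorial m : ℚ)) ≠ 0 :=
    fun m => Nat.cast_ne_zero.mpr (Nat.factorial_ne_zero m)
  apply pair_congr
  · ext n
    rcases n with _ | n
    · simp [coeff_thetaQ, coeff_four_mul, constantCoeff_thetaQ, gS, f0S]
    · simp only [coeff_thetaQ, coeff_four_mul, map_add, PowerSeries.coeff_C_mul,
        PowerSeries.coeff_succ_X_mul, gS, f0S, PowerSeries.coeff_mk, fact4_succ,
        Nat.factorial_succ, harmonic'_4succ, harmonic'_succ]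
      push_cast
      have := h1 n
      have := h2 n
      have := h2 (4*n)
      have ha : ((4*(n:ℚ)+1)) ≠ 0 := by positivity
      have hb : ((4*(n:ℚ)+2)) ≠ 0 := by positivity
      have hc : ((4*(n:ℚ)+3)) ≠ 0 := by positivity
      have hd : ((4*(n:ℚ)+4)) ≠ 0 := by positivity
      field_simp
      ring
  · ext n
    rcases n with _ | n
    · simp [coeff_thetaQ, coeff_four_mul, constantCoeff_thetaQ, f0S]
    · simp only [coeff_thetaQ, coeff_four_mul, map_add, PowerSeries.coeff_C_mul,
        PowerSeries.coeff_succ_X_mul, f0S, PowerSeries.coeff_mk, fact4_succ,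
        Nat.factorial_succ]
      push_cast
      have := h1 n
      have := h2 n
      have := h2 (4*n)
      field_simp
end
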